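/- Fix t with 0 < t < (3 − √3)/3 and define h_t : [0, π/6] → ℝ by h_t(γ) = (cos γ − √((1−t)² − sin²γ)) · sin γ. Then h_t is strictly convex on [0, π/6]. -/

import Mathlib

open Real Set

noncomputable def htD1 (r : ℝ) : ℝ → ℝ := fun γ =>
  (-Real.sin γ + Real.sin γ * Real.cos γ / Real.sqrt (r ^ 2 - Real.sin γ ^ 2)) * Real.sin γ
    + (Real.cos γ - Real.sqrt (r ^ 2 - Real.sin γ ^ 2)) * Real.cos γ

noncomputable def htD2 (r : ℝ) : ℝ → ℝ := fun γ =>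
  Real.sin γ * (Real.cos γ - Real.sqrt (r ^ 2 - Real.sin γ ^ 2)) *
    (3 * Real.cos γ * Real.sqrt (r ^ 2 - Real.sin γ ^ 2) ^ 2
      + Real.sin γ ^ 2 * Real.sqrt (r ^ 2 - Real.sin γ ^ 2)
      + Real.sin γ ^ 2 * Real.cos γ - Real.sqrt (r ^ 2 - Real.sin γ ^ 2) ^ 3)
    / Real.sqrt (r ^ 2 - Real.sin γ ^ 2) ^ 3

lemma ht_hasDerivAt1 (r x : ℝ) (hx : Real.sin x ^ 2 < r ^ 2) :
    HasDerivAt (fun γ : ℝ => (Real.cos γ - Real.sqrt (r ^ 2 - Real.sin γ ^ 2)) * Real.sin γ)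
      (htD1 r x) x := by
  have hpos : 0 < r ^ 2 - Real.sin x ^ 2 := by linarith
  have hq : 0 < Real.sqrt (r ^ 2 - Real.sin x ^ 2) := Real.sqrt_pos.mpr hpos
  have d0 : HasDerivAt (fun γ : ℝ => r ^ 2 - Real.sin γ ^ 2)
      (0 - 2 * Real.sin x ^ 1 * Real.cos x) x :=
    (hasDerivAt_const x (r ^ 2)).sub ((Real.hasDerivAt_sin x).pow 2)
  have dq := d0.sqrt (by positivity)
  have d := ((Real.hasDerivAt_cos x).sub dq).mul (Real.hasDerivAt_sin x)
  refine d.congr_deriv ?_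
  unfold htD1
  simp only [Pi.sub_apply, Pi.add_apply, Pi.neg_apply, Pi.div_apply, Pi.mul_apply]
  field_simp
  ring

lemma ht_hasDerivAt2 (r x : ℝ) (hx : Real.sin x ^ 2 < r ^ 2) :
    HasDerivAt (htD1 r) (htD2 r x) x := by
  have hpos : 0 < r ^ 2 - Real.sin x ^ 2 := by linarith
  have hq : 0 < Real.sqrt (r ^ 2 - Real.sin x ^ 2) := Real.sqrt_pos.mpr hpos
  have d0 : HasDerivAt (fun γ : ℝ => r ^ 2 - Real.sin γ ^ 2)
      (0 - 2 * Real.sin x ^ 1 * Real.cos x) x :=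
    (hasDerivAt_const x (r ^ 2)).sub ((Real.hasDerivAt_sin x).pow 2)
  have dq := d0.sqrt (by positivity)
  -- numerator of sc/q
  have dn : HasDerivAt (fun γ : ℝ => Real.sin γ * Real.cos γ)
      (Real.cos x * Real.cos x + Real.sin x * (-Real.sin x)) x :=
    (Real.hasDerivAt_sin x).mul (Real.hasDerivAt_cos x)
  have ddiv := dn.div dq hq.ne'
  have dA := (((Real.hasDerivAt_sin x).neg).add ddiv).mul (Real.hasDerivAt_sin x)
  have dB := ((Real.hasDerivAt_cos x).sub dq).mul (Real.hasDerivAt_cos x)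
  have d := dA.add dB
  refine d.congr_deriv ?_
  unfold htD2
  simp only [Pi.sub_apply, Pi.add_apply, Pi.neg_apply, Pi.div_apply, Pi.mul_apply]
  obtain ⟨q, hqe, hqpos⟩ : ∃ q, Real.sqrt (r ^ 2 - Real.sin x ^ 2) = q ∧ 0 < q := ⟨_, rfl, hq⟩
  rw [hqe]
  field_simp
  ring

/-- For fixed `t ∈ (0, (3-√3)/3)`, the height function
`h_t(γ) = (cos γ − √((1−t)² − sin²γ)) · sin γ` is strictly convex on `[0, π/6]`. -/
theorem ht_strictConvexOn (t : ℝ) (ht0 : 0 < t) (ht1 : t < (3 - Real.sqrt 3) / 3) :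
    StrictConvexOn ℝ (Set.Icc 0 (π / 6))
      (fun γ : ℝ => (Real.cos γ - Real.sqrt ((1 - t) ^ 2 - Real.sin γ ^ 2)) * Real.sin γ) := by
  have hs3 : Real.sqrt 3 ^ 2 = 3 := Real.sq_sqrt (by norm_num)
  have hs3pos : 0 < Real.sqrt 3 := Real.sqrt_pos.mpr (by norm_num)
  set r : ℝ := 1 - t with hr
  have hr1 : Real.sqrt 3 / 3 < r := by
    have : Real.sqrt 3 < 3 := by nlinarith
    rw [hr]; linarith [ht1]
  have hr2 : r < 1 := by rw [hr]; linarith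
  have hrpos : 0 < r := by
    have : 0 < Real.sqrt 3 / 3 := by positivity
    linarith
  have hrsq : 1 / 3 < r ^ 2 := by nlinarith
  apply strictConvexOn_of_deriv2_pos (convex_Icc _ _)
  · fun_prop
  · intro x hx
    rw [interior_Icc] at hx
    obtain ⟨hx0, hx6⟩ := hx
    have hpi : (0:ℝ) < π := Real.pi_pos
    have hs : 0 < Real.sin x := Real.sin_pos_of_pos_of_lt_pi hx0 (by linarith)
    have hshalf : Real.sin x < 1 / 2 := by
      have := Real.strictMonoOn_sin (a := x) (b := π / 6)
        ⟨by linarith, by linarith⟩ ⟨by linarith, by linarith⟩ hx6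
      rwa [Real.sin_pi_div_six] at this
    have hc : 0 < Real.cos x := Real.cos_pos_of_mem_Ioo ⟨by linarith, by linarith⟩
    have hsc : Real.sin x ^ 2 + Real.cos x ^ 2 = 1 := Real.sin_sq_add_cos_sq x
    have hxU : Real.sin x ^ 2 < r ^ 2 := by nlinarith
    have hU : IsOpen {y : ℝ | Real.sin y ^ 2 < r ^ 2} :=
      isOpen_lt (by fun_prop) continuous_const
    have hev : deriv (fun γ : ℝ => (Real.cos γ - Real.sqrt (r ^ 2 - Real.sin γ ^ 2)) * Real.sin γ)
        =ᶠ[nhds x] htD1 r := by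
      filter_upwards [hU.mem_nhds hxU] with y hy using (ht_hasDerivAt1 r y hy).deriv
    have h2 : deriv^[2] (fun γ : ℝ => (Real.cos γ - Real.sqrt (r ^ 2 - Real.sin γ ^ 2)) *
        Real.sin γ) x = htD2 r x := by
      simp only [Function.iterate_succ, Function.iterate_zero, Function.comp_apply, id]
      rw [hev.deriv_eq, (ht_hasDerivAt2 r x hxU).deriv]
    rw [h2]
    -- positivity of htD2
    unfold htD2
    have hpos : 0 < r ^ 2 - Real.sin x ^ 2 := by linarith
    have hq : 0 < Real.sqrt (r ^ 2 - Real.sin x ^ 2) := Real.sqrt_pos.mpr hpos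
    have hq2 : Real.sqrt (r ^ 2 - Real.sin x ^ 2) ^ 2 = r ^ 2 - Real.sin x ^ 2 :=
      Real.sq_sqrt hpos.le
    have hqc : Real.sqrt (r ^ 2 - Real.sin x ^ 2) < Real.cos x := by nlinarith
    have hfac : 0 < 3 * Real.cos x * Real.sqrt (r ^ 2 - Real.sin x ^ 2) ^ 2
        + Real.sin x ^ 2 * Real.sqrt (r ^ 2 - Real.sin x ^ 2)
        + Real.sin x ^ 2 * Real.cos x - Real.sqrt (r ^ 2 - Real.sin x ^ 2) ^ 3 := by
      nlinarith [sq_nonneg (Real.sqrt (r ^ 2 - Real.sin x ^ 2))]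
    apply div_pos
    · exact mul_pos (mul_pos hs (by linarith)) hfac
    · positivity
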